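/- If ℱ = {U₁,…,Uₙ} is a stable partition for φ and U₀ ∈ ↓ℱ, then the intersection-closure ℱ' = Cl({U₀, U₁,…,Uₙ}) is also a stable partition for φ: every remainder of ℱ' is contained in some remainder of ℱ, hence stable for φ. -/

import Mathlib

inductive Fml (α : Type) : Type
  | atom : α → Fml α
  | neg : Fml α → Fml α
  | and : Fml α → Fml α → Fml α
  | K : Fml α → Fml α
  | box : Fml α → Fml α

def Fml.imp {α : Type} (φ ψ : Fml α) : Fml α := (φ.and ψ.neg).neg
def Fml.or {α : Type} (φ ψ : Fml α) : Fml α := (φ.neg.and ψ.neg).neg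
def Fml.dia {α : Type} (φ : Fml α) : Fml α := φ.neg.box.neg
def Fml.L {α : Type} (φ : Fml α) : Fml α := φ.neg.K.neg

/-- Satisfaction in a subset model `⟨X, O, i⟩` at a pair `(x, U)`. -/
def Sat {X α : Type} (O : Set (Set X)) (i : α → Set X) : X → Set X → Fml α → Prop
  | x, _, .atom A => x ∈ i A
  | x, U, .neg φ => ¬ Sat O i x U φ
  | x, U, .and φ ψ => Sat O i x U φ ∧ Sat O i x U ψ
  | x, U, .K φ => ∀ y ∈ U, Sat O i y U φ
  | x, U, .box φ => ∀ V ∈ O, x ∈ V → V ⊆ U → Sat O i x V φ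

/-- A treelike space: `X ∈ O` and any two members of `O` are comparable or disjoint. -/
def Treelike {X : Type} (O : Set (Set X)) : Prop :=
  Set.univ ∈ O ∧ ∀ U ∈ O, ∀ V ∈ O, U ⊆ V ∨ V ⊆ U ∨ U ∩ V = ∅

/-- `down O U` = the members of `O` contained in `U`. -/
def down {X : Type} (O : Set (Set X)) (U : Set X) : Set (Set X) := {V ∈ O | V ⊆ U}

/-- The remainder `Rem(ℱ, U) = ↓U \ ⋃_{¬ U ⊆ W, W ∈ ℱ} ↓W`. -/
def Rem {X : Type} (O F : Set (Set X)) (U : Set X) : Set (Set X) :=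
  {V | V ∈ down O U ∧ ∀ W ∈ F, ¬ U ⊆ W → ¬ V ⊆ W}

/-- Closure under binary intersections. -/
def InterClosed {X : Type} (F : Set (Set X)) : Prop := ∀ U ∈ F, ∀ V ∈ F, U ∩ V ∈ F

/-- `G` is stable for `φ`: for each point `x`, the truth value of `φ` at `(x,V)`
is the same for all `V ∈ G` containing `x`. -/
def Stable {X α : Type} (O : Set (Set X)) (i : α → Set X) (G : Set (Set X)) (φ : Fml α) : Prop :=
  ∀ x : X, (∀ V ∈ G, x ∈ V → Sat O i x V φ) ∨ (∀ V ∈ G, x ∈ V → ¬ Sat O i x V φ)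

/-- Closure of a family under (finite nonempty) intersections. -/
def Cl {X : Type} (S : Set (Set X)) : Set (Set X) :=
  {V | ∃ T ⊆ S, T.Nonempty ∧ T.Finite ∧ V = ⋂₀ T}


lemma sInter_mem_of_interClosed {X : Type} {F : Set (Set X)} (hCl : InterClosed F) :
    ∀ T : Set (Set X), T.Finite → T ⊆ F → T.Nonempty → ⋂₀ T ∈ F := by
  intro T hT
  refine Set.Finite.induction_on T hT ?_ ?_
  · intro _ h; exact absurd rfl h.ne_empty
  · intro a T _ _ ih hsub _
    rcases T.eq_empty_or_nonempty with rfl | hTne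
    · simpa using hsub (Set.mem_insert a ∅)
    · rw [Set.sInter_insert]
      exact hCl _ (hsub (Set.mem_insert _ _)) _
        (ih (fun x hx => hsub (Set.mem_insert_of_mem _ hx)) hTne)

lemma stable_mono {X α : Type} {O : Set (Set X)} {i : α → Set X} {G G' : Set (Set X)}
    {φ : Fml α} (h : G' ⊆ G) (hG : Stable O i G φ) : Stable O i G' φ := by
  intro x
  rcases hG x with hl | hr
  · exact Or.inl fun V hV hx => hl V (h hV) hx
  · exact Or.inr fun V hV hx => hr V (h hV) hx

/-- If `ℱ` is a stable partition for `φ` and `U₀ ∈ ↓ℱ`, then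
`ℱ' = Cl({U₀} ∪ ℱ)` is also a stable partition for `φ`: every remainder of `ℱ'`
is contained in some remainder of `ℱ`, hence stable for `φ`. -/
theorem refined_stable_partition {X α : Type} (O : Set (Set X)) (i : α → Set X)
    (F : Set (Set X)) (hFin : F.Finite) (hCl : InterClosed F) (φ : Fml α)
    (hStab : ∀ U ∈ F, Stable O i (Rem O F U) φ)
    (U₀ : Set X) (hU₀ : U₀ ∈ O) (hd : ∃ U ∈ F, U₀ ⊆ U) :
    ∀ V ∈ Cl (insert U₀ F),
      (∃ U ∈ F, Rem O (Cl (insert U₀ F)) V ⊆ Rem O F U) ∧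
        Stable O i (Rem O (Cl (insert U₀ F)) V) φ := by
  have hFsub : F ⊆ Cl (insert U₀ F) := fun U hU =>
    ⟨{U}, by simp [Set.singleton_subset_iff, hU], Set.singleton_nonempty U,
      Set.finite_singleton U, (Set.sInter_singleton U).symm⟩
  intro V hV
  obtain ⟨T, hTsub, hTne, hTfin, rfl⟩ := hV
  set S : Set (Set X) := {U | U ∈ F ∧ ⋂₀ T ⊆ U} with hSdef
  have hSsub : S ⊆ F := fun U hU => hU.1
  have hSne : S.Nonempty := by
    by_cases h : ∃ U ∈ T, U ∈ F
    · obtain ⟨U, hUT, hUF⟩ := h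
      exact ⟨U, hUF, Set.sInter_subset_of_mem hUT⟩
    · obtain ⟨U₁, hU₁F, hU₁⟩ := hd
      have hTU₀ : ∀ x ∈ T, x = U₀ := fun x hx =>
        ((hTsub hx).resolve_right (fun hF => h ⟨x, hx, hF⟩))
      obtain ⟨t, ht⟩ := hTne
      have hsub0 : ⋂₀ T ⊆ U₀ := by
        have := Set.sInter_subset_of_mem ht
        rwa [hTU₀ t ht] at this
      exact ⟨U₁, hU₁F, hsub0.trans hU₁⟩
  have hSfin : S.Finite := hFin.subset hSsub
  have hUstar : ⋂₀ S ∈ F := sInter_mem_of_interClosed hCl S hSfin hSsub hSne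
  have hVU : ⋂₀ T ⊆ ⋂₀ S := Set.subset_sInter fun U hU => hU.2
  have hkey : ∀ W' ∈ F, ⋂₀ T ⊆ W' → ⋂₀ S ⊆ W' := fun W' hW' hVW' =>
    Set.sInter_subset_of_mem ⟨hW', hVW'⟩
  have hcont : Rem O (Cl (insert U₀ F)) (⋂₀ T) ⊆ Rem O F (⋂₀ S) := by
    rintro W ⟨⟨hWO, hWV⟩, hWrem⟩
    refine ⟨⟨hWO, hWV.trans hVU⟩, fun W' hW'F hnU => ?_⟩
    exact hWrem W' (hFsub hW'F) (fun hVW' => hnU (hkey W' hW'F hVW'))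
  exact ⟨⟨⋂₀ S, hUstar, hcont⟩, stable_mono hcont (hStab _ hUstar)⟩
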